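/- arXiv:0711.1391 — 2 statements merged into one kernel-verified Lean document; each statement's English description precedes it below -/
import Mathlib

section
/- Fix a reduced expression w = w_1 w_2 ... w_k for an element w of a Coxeter group W and a binary mask σ ∈ {0,1}^k. Then l(w) − l(w^σ) − 2·d(σ) = D(σ), where w^σ is the subword product determined by σ, d(σ) is the number of defect positions (positions j ≥ 2 with l(w^{σ[j−1]} w_j) < l(w^{σ[j−1]})), and D(σ) = (number of plain-zeros of σ) − (number of zero-defects of σ). -/
open CoxeterSystem Polynomial

variable {B W : Type*} [Group W] {M : CoxeterMatrix B}

namespace DeodharMu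

noncomputable section

/-- The subword of `ω` selected by the positions where the mask `σ` is `true`. -/
def maskedWord (ω : List B) (σ : List Bool) : List B :=
  ((ω.zip σ).filter (·.2)).map (·.1)

/-- The subword product `w^σ` determined by a mask `σ`. -/
def maskProd (cs : CoxeterSystem M W) (ω : List B) (σ : List Bool) : W :=
  cs.wordProd (maskedWord ω σ)

/-- Position `j` (0-indexed) of `ω` is a defect with respect to the mask `σ`:
multiplying the initial subword product `w^{σ[j-1]}` by the letter `ω_j` decreases length. -/
def IsDefect (cs : CoxeterSystem M W) (ω : List B) (σ : List Bool) (j : ℕ) : Prop :=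
  cs.length (maskProd cs (ω.take (j + 1)) (σ.take j ++ [true])) <
    cs.length (maskProd cs (ω.take j) (σ.take j))

instance (cs : CoxeterSystem M W) (ω : List B) (σ : List Bool) :
    DecidablePred (IsDefect cs ω σ) := fun _ => Nat.decLt _ _

/-- The number of defects `d(σ)`. -/
def defectCount (cs : CoxeterSystem M W) (ω : List B) (σ : List Bool) : ℕ :=
  ((Finset.range ω.length).filter (IsDefect cs ω σ)).card

/-- The number of zero-defects: positions with mask-value 0 that are defects. -/
def zeroDefectCount (cs : CoxeterSystem M W) (ω : List B) (σ : List Bool) : ℕ :=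
  ((Finset.range ω.length).filter
    (fun j => σ.getD j true = false ∧ IsDefect cs ω σ j)).card

/-- The number of plain-zeros: positions with mask-value 0 that are not defects. -/
def plainZeroCount (cs : CoxeterSystem M W) (ω : List B) (σ : List Bool) : ℕ :=
  ((Finset.range ω.length).filter
    (fun j => σ.getD j true = false ∧ ¬ IsDefect cs ω σ j)).card

/-- The Deodhar statistic `D(σ) = #plain-zeros − #zero-defects`. -/
def Dstat (cs : CoxeterSystem M W) (ω : List B) (σ : List Bool) : ℤ :=
  (plainZeroCount cs ω σ : ℤ) - zeroDefectCount cs ω σ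

/-- A mask is proper if it is not the all-ones mask. -/
def IsProperMask (ω : List B) (σ : List Bool) : Prop :=
  σ.length = ω.length ∧ σ ≠ List.replicate ω.length true

/-- A μ-mask: a proper mask with Deodhar statistic `D(σ) = 1`. -/
def IsMuMask (cs : CoxeterSystem M W) (ω : List B) (σ : List Bool) : Prop :=
  IsProperMask ω σ ∧ Dstat cs ω σ = 1

/-- A reduced word is Deodhar if every proper mask on it has positive Deodhar statistic. -/
def IsDeodharWord (cs : CoxeterSystem M W) (ω : List B) : Prop :=
  ∀ σ : List Bool, IsProperMask ω σ → 0 < Dstat cs ω σ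

/-- An element is Deodhar if every reduced expression for it is a Deodhar word. -/
def IsDeodhar (cs : CoxeterSystem M W) (w : W) : Prop :=
  ∀ ω : List B, cs.IsReduced ω → cs.wordProd ω = w → IsDeodharWord cs ω

/-- Bruhat order via the subword property: `x ≤ w` iff `x` is the product of a subword of
some (equivalently any) reduced expression for `w`. -/
def bruhatLE (cs : CoxeterSystem M W) (x w : W) : Prop :=
  ∃ (ω : List B) (σ : List Bool), cs.IsReduced ω ∧ cs.wordProd ω = w ∧
    σ.length = ω.length ∧ maskProd cs ω σ = x

/-- Strict Bruhat order. -/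
def bruhatLT (cs : CoxeterSystem M W) (x w : W) : Prop :=
  bruhatLE cs x w ∧ x ≠ w

/-- The prototype polynomial `P_x(q) = Σ_{σ : w^σ = x} q^{d(σ)}`. -/
def Ppoly [DecidableEq W] (cs : CoxeterSystem M W) (ω : List B) (x : W) : Polynomial ℤ :=
  ∑ m : Fin ω.length → Bool,
    if maskProd cs ω (List.ofFn m) = x then (Polynomial.X : Polynomial ℤ) ^ defectCount cs ω (List.ofFn m) else 0

/-- The μ-coefficient of a family `P` of polynomials: the coefficient of
`q^{(l(w)-l(x)-1)/2}`, taken to be zero when this exponent is not a nonnegative integer. -/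
def mu (cs : CoxeterSystem M W) (P : W → W → Polynomial ℤ) (x w : W) : ℤ :=
  if cs.length x < cs.length w ∧ (cs.length w - cs.length x) % 2 = 1 then
    (P x w).coeff ((cs.length w - cs.length x - 1) / 2)
  else 0

/-- A single commutation move: interchange two adjacent commuting generators. -/
def CommMove (M : CoxeterMatrix B) (ω ω' : List B) : Prop :=
  ∃ (l₁ l₂ : List B) (s t : B), M s t = 2 ∧ ω = l₁ ++ [s, t] ++ l₂ ∧ ω' = l₁ ++ [t, s] ++ l₂

/-- An element is fully commutative if any two of its reduced expressions are related
by a sequence of commutation moves. -/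
def FullyCommutative (cs : CoxeterSystem M W) (w : W) : Prop :=
  ∀ ω ω' : List B, cs.IsReduced ω → cs.wordProd ω = w → cs.IsReduced ω' → cs.wordProd ω' = w →
    Relation.ReflTransGen (CommMove M) ω ω'

/-- A word contains a short-braid: a consecutive factor `s t s` with `m(s,t) ≥ 3`. -/
def HasShortBraid (M : CoxeterMatrix B) (ω : List B) : Prop :=
  ∃ (l₁ l₂ : List B) (s t : B), 3 ≤ M s t ∧ ω = l₁ ++ [s, t, s] ++ l₂

/-- An element is short-braid avoiding if no reduced expression for it contains a
factor `s t s` with `s`, `t` non-commuting generators. -/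
def ShortBraidAvoiding (cs : CoxeterSystem M W) (w : W) : Prop :=
  ∀ ω : List B, cs.IsReduced ω → cs.wordProd ω = w → ¬ HasShortBraid M ω

/-- The heap partial order on positions of a word: the transitive closure of
`i ⋖ j` when `i < j` and the letters at `i` and `j` do not commute. -/
def HeapLT (cs : CoxeterSystem M W) (ω : List B) (i j : Fin ω.length) : Prop :=
  Relation.TransGen
    (fun i j : Fin ω.length => (i : ℕ) < (j : ℕ) ∧
      ¬ Commute (cs.simple (ω.get i)) (cs.simple (ω.get j))) i j

/-- Remove from a list the entries whose (0-indexed) positions lie in `J`. -/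
def removeIdx {α : Type*} (l : List α) (J : Finset ℕ) : List α :=
  (l.zipIdx.filter (fun p => p.2 ∉ J)).map Prod.fst

end

end DeodharMu

namespace DeodharMu

lemma maskProd_concat (cs : CoxeterSystem M W) (ω : List B) (σ : List Bool) (a : B) (b : Bool)
    (h : σ.length = ω.length) :
    maskProd cs (ω ++ [a]) (σ ++ [b]) =
      maskProd cs ω σ * (if b then cs.simple a else 1) := by
  unfold maskProd maskedWord
  rw [List.zip_append h.symm, List.filter_append, List.map_append, cs.wordProd_append]
  cases b <;> simp [CoxeterSystem.wordProd]

lemma count_concat (k : ℕ) (P Q : ℕ → Prop) [DecidablePred P] [DecidablePred Q]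
    (h : ∀ j < k, (P j ↔ Q j)) :
    ((Finset.range (k + 1)).filter P).card =
      ((Finset.range k).filter Q).card + (if P k then 1 else 0) := by
  rw [Finset.range_add_one, Finset.filter_insert,
    Finset.filter_congr (fun j hj => by rw [h j (Finset.mem_range.mp hj)])]
  split
  · rw [Finset.card_insert_of_notMem (by simp)]
  · omega

lemma isDefect_concat_iff (cs : CoxeterSystem M W) (ω : List B) (σ : List Bool) (a : B) (b : Bool)
    (h : σ.length = ω.length) (j : ℕ) (hj : j < ω.length) :
    IsDefect cs (ω ++ [a]) (σ ++ [b]) j ↔ IsDefect cs ω σ j := by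
  unfold IsDefect
  rw [List.take_append_of_le_length (by omega), List.take_append_of_le_length (by omega),
    List.take_append_of_le_length (by omega)]

lemma isDefect_concat_last (cs : CoxeterSystem M W) (ω : List B) (σ : List Bool) (a : B) (b : Bool)
    (h : σ.length = ω.length) :
    IsDefect cs (ω ++ [a]) (σ ++ [b]) ω.length ↔
      cs.IsRightDescent (maskProd cs ω σ) a := by
  unfold IsDefect CoxeterSystem.IsRightDescent
  rw [show (ω ++ [a]).take (ω.length + 1) = ω ++ [a] by
        rw [List.take_of_length_le (by simp)],
      List.take_left, ← h, List.take_left,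
      maskProd_concat cs ω σ a true h]
  simp

lemma key (cs : CoxeterSystem M W) (ω : List B) (σ : List Bool) (hlen : σ.length = ω.length) :
    (ω.length : ℤ) - cs.length (maskProd cs ω σ) - 2 * defectCount cs ω σ =
      Dstat cs ω σ := by
  induction ω using List.reverseRecOn generalizing σ with
  | nil =>
    rw [List.length_eq_zero_iff.mp hlen]
    simp [maskProd, maskedWord, defectCount, Dstat, plainZeroCount, zeroDefectCount]
  | append_singleton ω a ih =>
    have hσne : σ ≠ [] := by
      intro hc; rw [hc] at hlen; simp at hlen
    obtain ⟨τ, b, rfl⟩ : ∃ τ b, σ = τ ++ [b] :=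
      ⟨σ.dropLast, σ.getLast hσne, (List.dropLast_append_getLast hσne).symm⟩
    have hτ : τ.length = ω.length := by simpa using hlen
    have hdc : defectCount cs (ω ++ [a]) (τ ++ [b]) = defectCount cs ω τ +
        (if IsDefect cs (ω ++ [a]) (τ ++ [b]) ω.length then 1 else 0) := by
      unfold defectCount
      rw [List.length_append, List.length_singleton]
      exact count_concat ω.length _ _ (fun j hj => isDefect_concat_iff cs ω τ a b hτ j hj)
    have hgetD : ∀ j < ω.length, (τ ++ [b]).getD j true = τ.getD j true := by
      intro j hj
      simp [List.getD, List.getElem?_append_left (show j < τ.length by omega)]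
    have hgetDlast : (τ ++ [b]).getD ω.length true = b := by
      rw [← hτ]; simp
    have hzdc : zeroDefectCount cs (ω ++ [a]) (τ ++ [b]) = zeroDefectCount cs ω τ +
        (if b = false ∧ IsDefect cs (ω ++ [a]) (τ ++ [b]) ω.length then 1 else 0) := by
      unfold zeroDefectCount
      rw [List.length_append, List.length_singleton,
        count_concat ω.length _ _ (fun j hj => by
          rw [hgetD j hj, isDefect_concat_iff cs ω τ a b hτ j hj]), hgetDlast]
    have hpzc : plainZeroCount cs (ω ++ [a]) (τ ++ [b]) = plainZeroCount cs ω τ +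
        (if b = false ∧ ¬ IsDefect cs (ω ++ [a]) (τ ++ [b]) ω.length then 1 else 0) := by
      unfold plainZeroCount
      rw [List.length_append, List.length_singleton,
        count_concat ω.length _ _ (fun j hj => by
          rw [hgetD j hj, isDefect_concat_iff cs ω τ a b hτ j hj]), hgetDlast]
    have hdef := isDefect_concat_last cs ω τ a b hτ
    have hmp := maskProd_concat cs ω τ a b hτ
    have hIH := ih τ hτ
    unfold Dstat at hIH ⊢
    rw [hdc, hzdc, hpzc, hmp, List.length_append, List.length_singleton]
    by_cases hD : cs.IsRightDescent (maskProd cs ω τ) a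
    · have hl : cs.length (maskProd cs ω τ * cs.simple a) + 1 =
          cs.length (maskProd cs ω τ) := cs.isRightDescent_iff.mp hD
      cases b <;> simp [hdef, hD] <;> push_cast at hIH hl ⊢ <;> omega
    · have hl : cs.length (maskProd cs ω τ * cs.simple a) =
          cs.length (maskProd cs ω τ) + 1 := cs.not_isRightDescent_iff.mp hD
      cases b <;> simp [hdef, hD] <;> push_cast at hIH hl ⊢ <;> omega

end DeodharMu


open DeodharMu in
theorem stmt0 (cs : CoxeterSystem M W) (ω : List B) (σ : List Bool)
    (hred : cs.IsReduced ω) (hlen : σ.length = ω.length) :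
    (cs.length (cs.wordProd ω) : ℤ) - cs.length (maskProd cs ω σ) - 2 * defectCount cs ω σ =
      Dstat cs ω σ := by
  rw [hred]
  exact key cs ω σ hlen
end

section
/- Let w be a fully commutative element of a Coxeter group with reduced expression w_1...w_k, and suppose positions p < q correspond to the same generator s (w_p = w_q = s) and form a minimal pair (no position between them uses s). Then there exist at least two positions strictly between p and q in the heap order whose generators do not commute with s, and moreover these two generators occupy distinct columns (are distinct generators) when w is fully commutative in type A. -/
open CoxeterSystem Polynomial

variable {B W : Type*} [Group W] {M : CoxeterMatrix B}

section LateralConvexity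

open DeodharMu CoxeterSystem

namespace DeodharMuAux

variable {B W : Type*} [Group W] {M : CoxeterMatrix B}

lemma commute_wordProd (cs : CoxeterSystem M W) (a : B) (l : List B)
    (h : ∀ b ∈ l, Commute (cs.simple a) (cs.simple b)) :
    Commute (cs.simple a) (cs.wordProd l) := by
  induction l with
  | nil => rw [wordProd_nil]; exact Commute.one_right _
  | cons b tl ih =>
    rw [wordProd_cons]
    exact (h b List.mem_cons_self).mul_right
      (ih fun x hx => h x (List.mem_cons_of_mem _ hx))

lemma commMove_perm {ω ω' : List B} (h : CommMove M ω ω') : ω.Perm ω' := by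
  obtain ⟨l₁, l₂, s, t, -, h1, h2⟩ := h
  subst h1; subst h2
  rw [List.append_assoc, List.append_assoc]
  exact List.Perm.append_left l₁ ((List.Perm.swap t s []).append_right l₂)

lemma rtg_perm {ω ω' : List B} (h : Relation.ReflTransGen (CommMove M) ω ω') : ω.Perm ω' := by
  induction h with
  | refl => exact List.Perm.refl _
  | tail _ hstep ih => exact ih.trans (commMove_perm hstep)

lemma braid (cs : CoxeterSystem M W) {a t : B} (h3 : M a t = 3) :
    cs.simple t * cs.simple a * cs.simple t = cs.simple a * cs.simple t * cs.simple a := by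
  have h := cs.wordProd_braidWord_eq a t
  rw [braidWord, braidWord, h3, M.symmetric t a, h3] at h
  have e1 : alternatingWord a t 3 = [t, a, t] := rfl
  have e2 : alternatingWord t a 3 = [a, t, a] := rfl
  rw [e1, e2] at h
  simp only [wordProd_cons, wordProd_nil, mul_one] at h
  simpa [mul_assoc] using h

lemma commute_of_M_two (cs : CoxeterSystem M W) {a b : B} (h : M a b = 2) :
    Commute (cs.simple a) (cs.simple b) := by
  have h1 := cs.simple_mul_simple_pow a b
  rw [h, sq] at h1
  have h2 : cs.simple a * cs.simple b = (cs.simple a * cs.simple b)⁻¹ :=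
    (inv_eq_of_mul_eq_one_right h1).symm
  rwa [mul_inv_rev, cs.inv_simple, cs.inv_simple] at h2

lemma adj_of_not_commute {n : ℕ} (cs : CoxeterSystem (CoxeterMatrix.Aₙ n) W) {a b : Fin n}
    (h : ¬ Commute (cs.simple a) (cs.simple b)) :
    a ≠ b ∧ ((b:ℕ)+1 = a ∨ (a:ℕ)+1 = b) := by
  have hne : a ≠ b := by rintro rfl; exact h (Commute.refl _)
  refine ⟨hne, ?_⟩
  by_contra hadj
  exact h (commute_of_M_two cs (show CoxeterMatrix.Aₙ n a b = 2 by
    simp [CoxeterMatrix.Aₙ, CoxeterMatrix.A, Matrix.of_apply, hne, hadj]))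

lemma M_three_of_not_commute {n : ℕ} (cs : CoxeterSystem (CoxeterMatrix.Aₙ n) W) {a b : Fin n}
    (h : ¬ Commute (cs.simple a) (cs.simple b)) :
    CoxeterMatrix.Aₙ n a b = 3 := by
  obtain ⟨hne, hadj⟩ := adj_of_not_commute cs h
  simp [CoxeterMatrix.Aₙ, CoxeterMatrix.A, Matrix.of_apply, hne, hadj]

lemma not_reduced_sandwich (cs : CoxeterSystem M W) (A Bm C : List B) (a : B)
    (hB : ∀ b ∈ Bm, Commute (cs.simple a) (cs.simple b)) :
    ¬ cs.IsReduced (A ++ a :: (Bm ++ a :: C)) := by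
  intro hr
  have key : cs.wordProd (A ++ a :: (Bm ++ a :: C)) = cs.wordProd (A ++ (Bm ++ C)) := by
    simp only [wordProd_append, wordProd_cons]
    congr 1
    rw [← mul_assoc, (commute_wordProd cs a Bm hB).eq, mul_assoc,
      simple_mul_simple_cancel_left]
  have hle := cs.length_wordProd_le (A ++ (Bm ++ C))
  rw [← key] at hle
  rw [hr] at hle
  simp only [List.length_append, List.length_cons] at hle
  omega

lemma rearrange {G : Type*} [Group G] (b1 b2 pC sa st : G)
    (c1 : sa * b1 = b1 * sa) (c2 : sa * b2 = b2 * sa)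
    (hbr : st * sa * st = sa * st * sa) :
    sa * (b1 * (st * (b2 * (sa * pC)))) = b1 * (st * (sa * (st * (b2 * pC)))) := by
  calc sa * (b1 * (st * (b2 * (sa * pC))))
      = (sa * b1) * (st * (b2 * (sa * pC))) := by rw [mul_assoc]
    _ = b1 * (sa * (st * (b2 * (sa * pC)))) := by rw [c1, mul_assoc]
    _ = b1 * (sa * (st * ((b2 * sa) * pC))) := by rw [mul_assoc]
    _ = b1 * (sa * (st * ((sa * b2) * pC))) := by rw [c2]
    _ = b1 * ((sa * st * sa) * (b2 * pC)) := by simp only [mul_assoc]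
    _ = b1 * ((st * sa * st) * (b2 * pC)) := by rw [← hbr]
    _ = b1 * (st * (sa * (st * (b2 * pC)))) := by simp only [mul_assoc]

lemma no_single_crossing {n : ℕ} (cs : CoxeterSystem (CoxeterMatrix.Aₙ n) W) {w : W}
    (hfc : FullyCommutative cs w) (A B1 B2 C : List (Fin n)) (a t : Fin n)
    (hB1 : ∀ b ∈ B1, Commute (cs.simple a) (cs.simple b))
    (hB2 : ∀ b ∈ B2, Commute (cs.simple a) (cs.simple b))
    (hnc : ¬ Commute (cs.simple a) (cs.simple t))
    (hred : cs.IsReduced (A ++ a :: (B1 ++ t :: (B2 ++ a :: C))))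
    (hw : cs.wordProd (A ++ a :: (B1 ++ t :: (B2 ++ a :: C))) = w) : False := by
  set ω : List (Fin n) := A ++ a :: (B1 ++ t :: (B2 ++ a :: C)) with hω
  set ω' : List (Fin n) := A ++ (B1 ++ t :: a :: t :: (B2 ++ C)) with hω'
  have hta : t ≠ a := fun h => hnc (h ▸ Commute.refl _)
  have h3 : CoxeterMatrix.Aₙ n a t = 3 := M_three_of_not_commute cs hnc
  have hbr := braid cs h3
  have hprod : cs.wordProd ω = cs.wordProd ω' := by
    rw [hω, hω']
    simp only [wordProd_append, wordProd_cons]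
    rw [rearrange (cs.wordProd B1) (cs.wordProd B2) (cs.wordProd C) (cs.simple a) (cs.simple t)
      (commute_wordProd cs a B1 hB1).eq (commute_wordProd cs a B2 hB2).eq hbr]
  have hlen : ω'.length = ω.length := by
    simp only [hω, hω', List.length_append, List.length_cons]
    omega
  have hred' : cs.IsReduced ω' := by
    show cs.length (cs.wordProd ω') = ω'.length
    rw [← hprod, hred, hlen]
  have hw' : cs.wordProd ω' = w := by rw [← hprod]; exact hw
  have hperm : ω.Perm ω' := rtg_perm (hfc ω ω' hred hw hred' hw')
  have hcount := hperm.count_eq a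
  simp only [hω, hω', List.count_append, List.count_cons] at hcount
  simp [hta, Ne.symm hta] at hcount
  omega

lemma decomp0 {α : Type*} (ω : List α) (q : ℕ) (hq : q < ω.length) :
    ω = ω.take q ++ ω[q] :: ω.drop (q+1) := by
  conv_lhs => rw [← List.take_append_drop q ω]
  congr 1
  rw [List.drop_eq_getElem_cons hq]

lemma drop_decomp {α : Type*} (ω : List α) (p q : ℕ) (hpq : p < q) (hq : q < ω.length) :
    ω.drop (p+1) = (ω.drop (p+1)).take (q-(p+1)) ++
      ω[q] :: ω.drop (q+1) := by
  have hlen : q - (p+1) < (ω.drop (p+1)).length := by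
    rw [List.length_drop]; omega
  conv_lhs => rw [← List.take_append_drop (q-(p+1)) (ω.drop (p+1))]
  congr 1
  rw [List.drop_drop]
  conv_rhs => rw [← List.drop_eq_getElem_cons hq]
  congr 1
  omega

lemma decomp {α : Type*} (ω : List α) (p q : ℕ) (hpq : p < q) (hq : q < ω.length) :
    ω = ω.take p ++ ω[p]'(by omega) ::
      ((ω.drop (p+1)).take (q-(p+1)) ++ ω[q] :: ω.drop (q+1)) := by
  have h := decomp0 ω p (by omega)
  rw [drop_decomp ω p q hpq hq] at h
  exact h

lemma mem_mid {α : Type*} {ω : List α} {p q : ℕ} (hq : q < ω.length) {b : α}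
    (hb : b ∈ (ω.drop (p+1)).take (q-(p+1))) :
    ∃ r, p < r ∧ r < q ∧ ∃ h : r < ω.length, ω[r] = b := by
  obtain ⟨i, hi, hbi⟩ := List.mem_iff_getElem.mp hb
  have hi' : i < q - (p+1) := by
    have := hi
    simp only [List.length_take, List.length_drop] at this
    omega
  refine ⟨p+1+i, by omega, by omega, by omega, ?_⟩
  rw [List.getElem_take, List.getElem_drop] at hbi
  exact hbi

lemma main {n : ℕ} {W : Type*} [Group W] (cs : CoxeterSystem (CoxeterMatrix.Aₙ n) W)
    (w : W) (hfc : FullyCommutative cs w) (ω : List (Fin n)) (hred : cs.IsReduced ω)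
    (hw : cs.wordProd ω = w) :
    ∀ d : ℕ, ∀ p q : Fin ω.length, (q : ℕ) - p ≤ d → (p : ℕ) < q → ω.get p = ω.get q →
    (∀ r : Fin ω.length, (p : ℕ) < r → (r : ℕ) < q → ω.get r ≠ ω.get p) →
    ∃ r₁ r₂ : Fin ω.length, (p : ℕ) < r₁ ∧ (r₁ : ℕ) < q ∧ (p : ℕ) < r₂ ∧ (r₂ : ℕ) < q ∧
      r₁ ≠ r₂ ∧ ¬ Commute (cs.simple (ω.get p)) (cs.simple (ω.get r₁)) ∧
      ¬ Commute (cs.simple (ω.get p)) (cs.simple (ω.get r₂)) ∧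
      ω.get r₁ ≠ ω.get r₂ := by
  intro d
  induction d with
  | zero => intro p q hd hpq _ _; exfalso; omega
  | succ d ih =>
    intro p q hd hpq hsame hmin
    classical
    by_contra hcon
    push_neg at hcon
    set a : Fin n := ω.get p with ha
    have hq' : (q : ℕ) < ω.length := q.isLt
    have hgp : ω[(p:ℕ)]'(by omega) = a := (List.get_eq_getElem (l := ω) (i := p)).symm
    have hgq : ω[(q:ℕ)] = a := by rw [← List.get_eq_getElem (l := ω) (i := q), ← hsame]
    set T : Finset ℕ := (Finset.Ioo (p:ℕ) (q:ℕ)).filter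
      (fun m => ∃ h : m < ω.length, ¬ Commute (cs.simple a) (cs.simple (ω[m]'h))) with hT
    have memT : ∀ m : ℕ, m ∈ T ↔ ((p:ℕ) < m ∧ m < (q:ℕ) ∧
        ∃ h : m < ω.length, ¬ Commute (cs.simple a) (cs.simple (ω[m]'h))) := by
      intro m
      simp [hT, Finset.mem_filter, Finset.mem_Ioo, and_assoc]
    rcases T.eq_empty_or_nonempty with hTe | hTne
    · -- no non-commuting letter between the two occurrences: not reduced
      have hdec := decomp ω p q hpq hq'
      rw [hgp, hgq] at hdec
      refine not_reduced_sandwich cs (ω.take p) ((ω.drop ((p:ℕ)+1)).take ((q:ℕ)-((p:ℕ)+1)))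
        (ω.drop ((q:ℕ)+1)) a ?_ (hdec ▸ hred)
      intro b hb
      obtain ⟨m, hm1, hm2, hmlen, hmb⟩ := mem_mid hq' hb
      by_contra hbc
      have : m ∈ T := (memT m).mpr ⟨hm1, hm2, hmlen, by rw [hmb]; exact hbc⟩
      rw [hTe] at this
      exact absurd this (Finset.notMem_empty m)
    · have hr1T := T.min'_mem hTne
      set r1 : ℕ := T.min' hTne with hr1
      obtain ⟨hpr1, hr1q, hr1len, hnc1⟩ := (memT r1).mp hr1T
      by_cases hone : ∀ m ∈ T, m = r1
      · -- exactly one crossing: braid-move contradiction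
        have hdec := decomp ω p r1 hpr1 hr1len
        rw [drop_decomp ω r1 (q:ℕ) hr1q hq'] at hdec
        rw [hgp, hgq] at hdec
        refine no_single_crossing cs hfc (ω.take p)
          ((ω.drop ((p:ℕ)+1)).take (r1-((p:ℕ)+1)))
          ((ω.drop (r1+1)).take ((q:ℕ)-(r1+1))) (ω.drop ((q:ℕ)+1)) a (ω[r1]'hr1len)
          ?_ ?_ hnc1 (hdec ▸ hred) (hdec ▸ hw)
        · intro b hb
          obtain ⟨m, hm1, hm2, hmlen, hmb⟩ := mem_mid hr1len hb
          by_contra hbc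
          have hmT : m ∈ T := (memT m).mpr ⟨hm1, by omega, hmlen, by rw [hmb]; exact hbc⟩
          have := hone m hmT
          omega
        · intro b hb
          obtain ⟨m, hm1, hm2, hmlen, hmb⟩ := mem_mid hq' hb
          by_contra hbc
          have hmT : m ∈ T := (memT m).mpr ⟨by omega, hm2, hmlen, by rw [hmb]; exact hbc⟩
          have := hone m hmT
          omega
      · -- at least two crossings, all with the same letter: recurse
        push_neg at hone
        obtain ⟨m0, hm0T, hm0ne⟩ := hone
        have hT2ne : (T.filter (fun m => r1 < m)).Nonempty := by
          refine ⟨m0, Finset.mem_filter.mpr ⟨hm0T, ?_⟩⟩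
          have := T.min'_le m0 hm0T
          omega
        set r2 : ℕ := (T.filter (fun m => r1 < m)).min' hT2ne with hr2
        have hr2mem := (T.filter (fun m => r1 < m)).min'_mem hT2ne
        have hr2T : r2 ∈ T := (Finset.mem_filter.mp hr2mem).1
        have hr12 : r1 < r2 := (Finset.mem_filter.mp hr2mem).2
        obtain ⟨hpr2, hr2q, hr2len, hnc2⟩ := (memT r2).mp hr2T
        have hr2min : ∀ m ∈ T, r1 < m → r2 ≤ m := fun m hm hlt =>
          (T.filter (fun m => r1 < m)).min'_le m (Finset.mem_filter.mpr ⟨hm, hlt⟩)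
        set p1 : Fin ω.length := ⟨r1, hr1len⟩ with hp1
        set p2 : Fin ω.length := ⟨r2, hr2len⟩ with hp2
        have hp1v : (p1 : ℕ) = r1 := rfl
        have hp2v : (p2 : ℕ) = r2 := rfl
        have hg1 : ω.get p1 = ω[r1]'hr1len := List.get_eq_getElem (l := ω) (i := p1)
        have hg2 : ω.get p2 = ω[r2]'hr2len := List.get_eq_getElem (l := ω) (i := p2)
        have hsame12 : ω.get p1 = ω.get p2 := by
          refine hcon p1 p2 hpr1 hr1q hpr2 hr2q ?_ ?_ ?_
          · exact fun h => by rw [Fin.mk.injEq] at h; omega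
          · rw [hg1]; exact hnc1
          · rw [hg2]; exact hnc2
        have hmin12 : ∀ r : Fin ω.length, (p1 : ℕ) < r → (r : ℕ) < p2 →
            ω.get r ≠ ω.get p1 := by
          intro r hlt1 hlt2 heq
          have hnc : ¬ Commute (cs.simple a) (cs.simple (ω.get r)) := by
            rw [heq, hg1]; exact hnc1
          have hrT : (r:ℕ) ∈ T := (memT r).mpr ⟨by omega, by omega, r.isLt, by
            rw [← List.get_eq_getElem (l := ω) (i := r)]; exact hnc⟩
          have := hr2min r hrT (by exact_mod_cast hlt1)
          omega
        obtain ⟨m1, m2, hm1a, hm1b, hm2a, hm2b, hmne, hmc1, hmc2, hmneq⟩ :=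
          ih p1 p2 (by omega) (by omega)
            hsame12 hmin12
        -- the letters at m1, m2 are the two distinct neighbors of t := ω[r1];
        -- a is also a neighbor of t, so a occurs strictly between p and q: contradiction
        have hA0 := adj_of_not_commute cs hnc1
        rw [← hg1] at hA0
        have hA1 := adj_of_not_commute cs hmc1
        have hA2 := adj_of_not_commute cs hmc2
        have hvne : (ω.get m1 : ℕ) ≠ (ω.get m2 : ℕ) := fun h => hmneq (Fin.val_injective h)
        have hcase : (a : ℕ) = (ω.get m1 : ℕ) ∨ (a : ℕ) = (ω.get m2 : ℕ) := by omega
        have hp1lt : (p : ℕ) < p1 := hpr1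
        have hp2lt : (p2 : ℕ) < q := hr2q
        rcases hcase with hc | hc
        · exact hmin m1 (by omega) (by omega) (Fin.val_injective hc.symm)
        · exact hmin m2 (by omega) (by omega) (Fin.val_injective hc.symm)

end DeodharMuAux

end LateralConvexity


open DeodharMu in
theorem stmt10 {n : ℕ} {W : Type*} [Group W] (cs : CoxeterSystem (CoxeterMatrix.Aₙ n) W)
    (w : W) (hfc : FullyCommutative cs w) (ω : List (Fin n)) (hred : cs.IsReduced ω)
    (hw : cs.wordProd ω = w) (p q : Fin ω.length) (hpq : (p : ℕ) < q)
    (hsame : ω.get p = ω.get q)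
    (hmin : ∀ r : Fin ω.length, (p : ℕ) < r → (r : ℕ) < q → ω.get r ≠ ω.get p) :
    ∃ r₁ r₂ : Fin ω.length, (p : ℕ) < r₁ ∧ (r₁ : ℕ) < q ∧ (p : ℕ) < r₂ ∧ (r₂ : ℕ) < q ∧
      r₁ ≠ r₂ ∧ ¬ Commute (cs.simple (ω.get p)) (cs.simple (ω.get r₁)) ∧
      ¬ Commute (cs.simple (ω.get p)) (cs.simple (ω.get r₂)) ∧
      ω.get r₁ ≠ ω.get r₂ :=
  DeodharMuAux.main cs w hfc ω hred hw ((q:ℕ)-p) p q le_rfl hpq hsame hmin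
end
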